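/- Let N = 2, q = −1. Suppose c : (Z^2/2Z^2 \ {0}) × (Z^2/2Z^2) → C satisfies the system c(m, n+k)c(n, k) − c(n, m+k)c(m, k) = ((−1)^{m2 n1} − (−1)^{m1 n2}) c(m+n, k) for all m, n ∈ Z^2/2Z^2 \ {0}, k ∈ Z^2/2Z^2 (with c(m,·) := 0 for m = 0 in Z^2/2Z^2), and the normalization c((1,0),(0,0)) = c((1,0),(0,1)) = c((0,1),(1,0)) = 1. Then c(m,k) = (−1)^{m2 k1} for all m ∈ Z^2/2Z^2 \ {0}, k ∈ Z^2/2Z^2. -/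
import Mathlib


/-- Subcase (a) of Theorem 2.3 (`N = 2`, `q = −1`): if `c` on `(ℤ²/2ℤ²) × (ℤ²/2ℤ²)`
satisfies the system (2.20) (with `c(0,·) = 0`) and is normalized so that (2.22),
`c(m,k) = (−1)^(m₂k₁)`, holds at the three points `(m,k) = ((1,0),(0,0))`,
`((1,0),(0,1))`, `((0,1),(1,0))` (values `1, 1, (−1)^(1·1) = −1` respectively),
then `c(m,k) = (−1)^(m₂k₁)` for all `m ≠ 0`, `k`. -/
theorem stmt_17 (c : ZMod 2 × ZMod 2 → ZMod 2 × ZMod 2 → ℂ)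
    (hc0 : ∀ k : ZMod 2 × ZMod 2, c 0 k = 0)
    (hsys : ∀ m n k : ZMod 2 × ZMod 2, m ≠ 0 → n ≠ 0 →
      c m (n + k) * c n k - c n (m + k) * c m k =
        ((-1 : ℂ) ^ (m.2.val * n.1.val) - (-1 : ℂ) ^ (m.1.val * n.2.val)) * c (m + n) k)
    (h1 : c (1, 0) (0, 0) = 1) (h2 : c (1, 0) (0, 1) = 1)
    (h3 : c (0, 1) (1, 0) = (-1 : ℂ) ^ (1 * 1 : ℕ)) :
    ∀ m k : ZMod 2 × ZMod 2, m ≠ 0 → c m k = (-1 : ℂ) ^ (m.2.val * k.1.val) := by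
  norm_num at h1 h2 h3
  have e1a := hsys (1,0) (0,1) (0,0) (by decide) (by decide)
  have e1b := hsys (1,0) (0,1) (0,1) (by decide) (by decide)
  have e1c := hsys (1,0) (0,1) (1,0) (by decide) (by decide)
  have e2a := hsys (1,0) (1,1) (0,0) (by decide) (by decide)
  have e2b := hsys (1,0) (1,1) (0,1) (by decide) (by decide)
  have e2c := hsys (1,0) (1,1) (1,0) (by decide) (by decide)
  have e2d := hsys (1,0) (1,1) (1,1) (by decide) (by decide)
  have e3a := hsys (0,1) (1,1) (0,0) (by decide) (by decide)
  have e3b := hsys (0,1) (1,1) (0,1) (by decide) (by decide)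
  simp only [show (1,0)+(0,0) = ((1,0) : ZMod 2 × ZMod 2) from by decide,
    show (1,0)+(1,0) = ((0,0) : ZMod 2 × ZMod 2) from by decide,
    show (1,0)+(0,1) = ((1,1) : ZMod 2 × ZMod 2) from by decide,
    show (1,0)+(1,1) = ((0,1) : ZMod 2 × ZMod 2) from by decide,
    show (0,1)+(0,0) = ((0,1) : ZMod 2 × ZMod 2) from by decide,
    show (0,1)+(1,0) = ((1,1) : ZMod 2 × ZMod 2) from by decide,
    show (0,1)+(0,1) = ((0,0) : ZMod 2 × ZMod 2) from by decide,
    show (0,1)+(1,1) = ((1,0) : ZMod 2 × ZMod 2) from by decide,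
    show (1,1)+(0,0) = ((1,1) : ZMod 2 × ZMod 2) from by decide,
    show (1,1)+(1,0) = ((0,1) : ZMod 2 × ZMod 2) from by decide,
    show (1,1)+(0,1) = ((1,0) : ZMod 2 × ZMod 2) from by decide,
    show (1,1)+(1,1) = ((0,0) : ZMod 2 × ZMod 2) from by decide]
    at e1a e1b e1c e2a e2b e2c e2d e3a e3b
  norm_num [show (0:ZMod 2).val = 0 from rfl, show (1:ZMod 2).val = 1 from rfl,
    h1, h2, h3] at e1a e1b e1c e2a e2b e2c e2d e3a e3b
  set a1 := c (1,0) (1,0) with ha1d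
  set a3 := c (1,0) 1 with ha3d
  set b0 := c (0,1) 0 with hb0d
  set b2 := c (0,1) (0,1) with hb2d
  set b3 := c (0,1) 1 with hb3d
  set d0 := c 1 0 with hd0d
  set d1 := c 1 (1,0) with hd1d
  set d2 := c 1 (0,1) with hd2d
  set d3 := c 1 1 with hd3d
  have hS1 : a3 = 4 - a1 - 2*a1*b0 := by
    linear_combination (-1)*e1c - 2*e2c + a1*e1a
  have hP1 : a1*(b0+1)^2 = 4 := by
    linear_combination (-1)*e2a - e2c + d0*hS1 - (2 - a1 - a1*b0)*e1a
  have hT : b3 = b2*(b0+2) - 4 := by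
    linear_combination (-1)*e1b + 2*e3b - b2*e1a
  have hP2 : b2*(b0+1)^2 = 4*(b0+1) - 4 := by
    linear_combination e3a - b0*e3b - d0*hT + (b2*(b0+1)-2)*e1a
  have hP3 : d2*(b0+1) = 2 := by
    linear_combination (-1/2)*hP2 + (b2*(b0+1)/2)*e1a - (b0+1)*e3b
  have hB3 : b3*(b0+1)^2 = -4 := by
    linear_combination (b0+2)*hP2 + (b0+1)^2*hT
  have hs0 : (b0+1)*(1-b0) = 0 := by
    linear_combination ((b0+1)^3/16)*e2b + ((b0+1)^3/16)*e2d
      + ((b0+1)^3*d2/16)*hS1 + ((b0+1)^2*(4-2*a1*(b0+1))/16)*hP3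
      + (-(b0+1)/4)*hP1 + ((b0+1)/8)*hP2 + ((b0+1)/8)*hB3
  have hb0 : b0 = 1 := by
    rcases mul_eq_zero.mp hs0 with h | h
    · exfalso
      have h4 : (4:ℂ) = 0 := by linear_combination (-1)*hP1 + a1*(b0+1)*h
      norm_num at h4
    · linear_combination -h
  have hd0 : d0 = 1 := by linear_combination (-1/2)*e1a + (1/2)*hb0
  have ha1 : a1 = 1 := by linear_combination (1/4)*hP1 - (a1*(b0+3)/4)*hb0
  have ha3 : a3 = 1 := by linear_combination hS1 - (2*b0+1)*ha1 - 2*hb0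
  have hd1 : d1 = -1 := by linear_combination e2c + a1*hd0 + ha1
  have hd2 : d2 = 1 := by linear_combination (1/2)*hP3 - (d2/2)*hb0
  have hb2 : b2 = 1 := by linear_combination (1/4)*hP2 + (1 - b2 - b2*(b0-1)/4)*hb0
  have hb3 : b3 = -1 := by linear_combination hT + (b0+2)*hb2 + hb0
  have hd3 : d3 = -1 := by linear_combination (-1)*e2b + d2*ha1 + hd2 - 2*hb2
  have hmcases : ∀ m : ZMod 2 × ZMod 2, m ≠ 0 → m = (1,0) ∨ m = (0,1) ∨ m = (1,1) := by decide
  have hkcases : ∀ k : ZMod 2 × ZMod 2, k = (0,0) ∨ k = (1,0) ∨ k = (0,1) ∨ k = (1,1) := by decide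
  intro m k hm
  rcases hmcases m hm with rfl | rfl | rfl <;>
    rcases hkcases k with rfl | rfl | rfl | rfl <;>
    norm_num [show (0:ZMod 2).val = 0 from rfl, show (1:ZMod 2).val = 1 from rfl] <;>
    first
      | exact h1 | exact h2 | exact h3 | exact ha1 | exact ha3
      | exact hb0 | exact hb2 | exact hb3
      | exact hd0 | exact hd1 | exact hd2 | exact hd3
      | (rw [show ((1,1) : ZMod 2 × ZMod 2) = 1 from by decide]; assumption)
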